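/- arXiv:1508.07154 — 4 statements merged into one kernel-verified Lean document; each statement's English description precedes it below -/
import Mathlib

section
/- If G is a simple graph on n ≥ 4 vertices such that every vertex has degree at least n/2 + 1, then any two distinct vertices of G are joined by a Hamiltonian path, i.e., a path that visits every vertex of G. -/
open SimpleGraph

/-- The largest even integer not greater than `x`. -/
noncomputable def evenFloor (x : ℝ) : ℤ := 2 * ⌊x / 2⌋

/-- The largest odd integer not greater than `x`. -/
noncomputable def oddFloor (x : ℝ) : ℤ := 2 * ⌊(x - 1) / 2⌋ + 1

/-- `G` contains a cycle on exactly `m` vertices. -/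
def HasCycleLen {V : Type*} (G : SimpleGraph V) (m : ℕ) : Prop :=
  ∃ (v : V) (w : G.Walk v v), w.IsCycle ∧ w.length = m

/-- The colour-`i` subgraph of the complete graph on `V` whose edges are coloured by `χ`. -/
def colourGraph {V : Type*} (χ : Sym2 V → Fin 3) (i : Fin 3) : SimpleGraph V where
  Adj u v := u ≠ v ∧ χ s(u, v) = i
  symm := by
    constructor
    intro u v h
    refine ⟨h.1.symm, ?_⟩
    rw [Sym2.eq_swap]
    exact h.2
  loopless := ⟨fun u h => h.1 rfl⟩

/-- Every 3-colouring of the edges of the complete graph on `N` vertices yields, for some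
`i ∈ {1,2,3}`, a cycle on `mᵢ` vertices all of whose edges have colour `i`. -/
def CycleRamseyProp (m₁ m₂ m₃ N : ℕ) : Prop :=
  ∀ χ : Sym2 (Fin N) → Fin 3,
    HasCycleLen (colourGraph χ 0) m₁ ∨ HasCycleLen (colourGraph χ 1) m₂ ∨
      HasCycleLen (colourGraph χ 2) m₃

/-- The degree of `v` in `G`. -/
noncomputable def ndeg {V : Type*} (G : SimpleGraph V) (v : V) : ℕ :=
  {u : V | G.Adj v u}.ncard

/-- The number of neighbours of `v` inside the set `S`. -/
noncomputable def degIn {V : Type*} (G : SimpleGraph V) (S : Finset V) (v : V) : ℕ :=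
  {u : V | u ∈ S ∧ G.Adj v u}.ncard

/-- The number of ordered pairs `(a, b) ∈ A × B` with `a` adjacent to `b` in `G`. -/
noncomputable def pairCount {V : Type*} (G : SimpleGraph V) (A B : Finset V) : ℕ :=
  {p : V × V | p.1 ∈ A ∧ p.2 ∈ B ∧ G.Adj p.1 p.2}.ncard

/-- The density `d(A,B)` of the pair `(A, B)` in `G`. -/
noncomputable def density {V : Type*} (G : SimpleGraph V) (A B : Finset V) : ℝ :=
  (pairCount G A B : ℝ) / ((A.card : ℝ) * (B.card : ℝ))

/-- The pair `(A, B)` is `(ε, G)`-regular. -/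
def IsRegularPair {V : Type*} (G : SimpleGraph V) (ε : ℝ) (A B : Finset V) : Prop :=
  ∀ A' ⊆ A, ∀ B' ⊆ B, ε * (A.card : ℝ) ≤ (A'.card : ℝ) →
    ε * (B.card : ℝ) ≤ (B'.card : ℝ) →
    |density G A' B' - density G A B| < ε

/-- The pair `(A, B)` is simultaneously `(ε, Gᵣ)`-regular for `r = 1, 2, 3`. -/
def SimRegular {V : Type*} (ε : ℝ) (G₁ G₂ G₃ : SimpleGraph V) (A B : Finset V) : Prop :=
  IsRegularPair G₁ ε A B ∧ IsRegularPair G₂ ε A B ∧ IsRegularPair G₃ ε A B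

/-- `M` is a connected-matching in `G`: a collection of edges, pairwise vertex-disjoint,
all lying in the same connected component of `G`. -/
def IsConnMatching {V : Type*} (G : SimpleGraph V) (M : Finset (V × V)) : Prop :=
  (∀ e ∈ M, G.Adj e.1 e.2) ∧
  (∀ e ∈ M, ∀ f ∈ M, e ≠ f → e.1 ≠ f.1 ∧ e.1 ≠ f.2 ∧ e.2 ≠ f.1 ∧ e.2 ≠ f.2) ∧
  (∀ e ∈ M, ∀ f ∈ M, G.Reachable e.1 f.1)

/-- `G` contains a connected-matching on at least `m` vertices. -/
def HasConnMatching {V : Type*} (G : SimpleGraph V) (m : ℝ) : Prop :=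
  ∃ M : Finset (V × V), IsConnMatching G M ∧ m ≤ 2 * (M.card : ℝ)

/-- `G` contains an odd connected-matching on at least `m` vertices: a connected-matching
whose component also contains an odd cycle. -/
def HasOddConnMatching {V : Type*} (G : SimpleGraph V) (m : ℝ) : Prop :=
  ∃ M : Finset (V × V), IsConnMatching G M ∧ m ≤ 2 * (M.card : ℝ) ∧
    ∃ (v : V) (w : G.Walk v v), w.IsCycle ∧ Odd w.length ∧ ∀ e ∈ M, G.Reachable e.1 v

/-- `(V₀, V₁, …, V_K)` (given as `P : Fin (K+1) → Finset V`, with `P 0` the exceptional class)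
is an `(ε, G₁, G₂, G₃)`-regular partition. -/
def IsRegularPartition3 {V : Type*} [Fintype V] (ε : ℝ) (G₁ G₂ G₃ : SimpleGraph V)
    {K : ℕ} (P : Fin (K + 1) → Finset V) : Prop :=
  (∀ i j, i ≠ j → Disjoint (P i) (P j)) ∧
  (∀ v : V, ∃ i, v ∈ P i) ∧
  ((P 0).card : ℝ) ≤ ε * (Fintype.card V : ℝ) ∧
  (∀ i j : Fin (K + 1), i ≠ 0 → j ≠ 0 → (P i).card = (P j).card) ∧
  (∀ i : Fin (K + 1), i ≠ 0 →
    (({j : Fin (K + 1) | j ≠ 0 ∧ j ≠ i ∧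
        ¬ SimRegular ε G₁ G₂ G₃ (P i) (P j)}.ncard : ℝ) ≤ ε * K))

/-- The colour-`Gc` subgraph of the three-multicoloured `(ε, ξ, Π)`-reduced-graph of the
three-coloured graph with colour subgraphs `G₁, G₂, G₃` and regular partition `P`:
vertices are the non-exceptional classes `P 1, …, P K`; two of them are adjacent if the pair is
simultaneously `(ε, Gᵣ)`-regular for `r = 1,2,3` and receive colour `Gc` if moreover the
`Gc`-density of the pair is at least `ξ`. -/
def reducedGraph {V : Type*} (ε ξ : ℝ) (G₁ G₂ G₃ : SimpleGraph V) {K : ℕ}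
    (P : Fin (K + 1) → Finset V) (Gc : SimpleGraph V) : SimpleGraph (Fin K) where
  Adj a b := a ≠ b ∧
    (SimRegular ε G₁ G₂ G₃ (P a.succ) (P b.succ) ∧
      SimRegular ε G₁ G₂ G₃ (P b.succ) (P a.succ)) ∧
    (ξ ≤ density Gc (P a.succ) (P b.succ) ∧ ξ ≤ density Gc (P b.succ) (P a.succ))
  symm := by
    constructor
    intro a b h
    exact ⟨h.1.symm, ⟨h.2.1.2, h.2.1.1⟩, ⟨h.2.2.2, h.2.2.1⟩⟩
  loopless := ⟨fun a h => h.1 rfl⟩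

/-- The two-multicoloured graph induced on `X`, with colour subgraphs `Gγ₁` (colour `γ₁`)
and `Gγ₂` (colour `γ₂`), contains a two-multicoloured spanning subgraph belonging to the class
`H(x₁, x₂, c₁, c₂, γ₁, γ₂)`. -/
def ContainsClassH {V : Type*} [DecidableEq V] (Gγ₁ Gγ₂ : SimpleGraph V) (X : Finset V)
    (x₁ x₂ c₁ c₂ : ℝ) : Prop :=
  ∃ (H₁ H₂ : SimpleGraph V) (X₁ X₂ : Finset V),
    H₁ ≤ Gγ₁ ∧ H₂ ≤ Gγ₂ ∧
    (∀ u v : V, (H₁ ⊔ H₂).Adj u v → u ∈ X ∧ v ∈ X) ∧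
    Disjoint X₁ X₂ ∧ X₁ ∪ X₂ = X ∧
    x₁ ≤ (X₁.card : ℝ) ∧ x₂ ≤ (X₂.card : ℝ) ∧
    (∀ v ∈ X, ((X.card : ℝ) - 1) - c₁ ≤ (degIn (H₁ ⊔ H₂) X v : ℝ)) ∧
    (∀ v ∈ X₁, (1 - c₂) * ((X₁.card : ℝ) - 1) ≤ (degIn H₁ X₁ v : ℝ)) ∧
    (∀ v ∈ X₁, (degIn H₂ X₁ v : ℝ) ≤ c₂ * ((X₁.card : ℝ) - 1)) ∧
    (∀ v ∈ X₁, (1 - c₂) * (X₂.card : ℝ) ≤ (degIn H₂ X₂ v : ℝ)) ∧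
    (∀ v ∈ X₂, (1 - c₂) * (X₁.card : ℝ) ≤ (degIn H₂ X₁ v : ℝ)) ∧
    (∀ v ∈ X₁, (degIn H₁ X₂ v : ℝ) ≤ c₂ * (X₂.card : ℝ)) ∧
    (∀ v ∈ X₂, (degIn H₁ X₁ v : ℝ) ≤ c₂ * (X₁.card : ℝ))

/-- Membership of the structure `H((a − 2η^{1/32})k, (b/2 − 2η^{1/32})k, 3η⁴k, η^{1/32}, γ₁, γ₂)`
on a vertex set `X`, where `Ga`, `Gb` are the colour-`γ₁` and colour-`γ₂` subgraphs. -/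
def MemH1 {V : Type*} [DecidableEq V] (Ga Gb : SimpleGraph V) (a b η : ℝ) (k : ℕ)
    (X : Finset V) : Prop :=
  ContainsClassH Ga Gb X ((a - 2 * η ^ ((1 : ℝ) / 32)) * k)
    ((b / 2 - 2 * η ^ ((1 : ℝ) / 32)) * k) (3 * η ^ 4 * k) (η ^ ((1 : ℝ) / 32))

/-- The edge `uv` is coloured exclusively with the colour of `Ga` (and not the colours of
`Gb`, `Gc`). -/
def ExclColour {V : Type*} (Ga Gb Gc : SimpleGraph V) (u v : V) : Prop :=
  Ga.Adj u v ∧ ¬ Gb.Adj u v ∧ ¬ Gc.Adj u v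

/-- The three-multicoloured graph with colour subgraphs `G₁, G₂, G₃` (red, blue, green)
contains a subgraph from the class `K(x₁, x₂, x₃, c)`. -/
def ContainsClassK {V : Type*} [DecidableEq V] (G₁ G₂ G₃ : SimpleGraph V)
    (x₁ x₂ x₃ c : ℝ) : Prop :=
  ∃ (H : SimpleGraph V) (X₁ X₂ X₃ : Finset V),
    H ≤ G₁ ⊔ G₂ ⊔ G₃ ∧
    Disjoint X₁ X₂ ∧ Disjoint X₁ X₃ ∧ Disjoint X₂ X₃ ∧
    x₁ ≤ (X₁.card : ℝ) ∧ x₂ ≤ (X₂.card : ℝ) ∧ x₃ ≤ (X₃.card : ℝ) ∧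
    (∀ u v : V, H.Adj u v → u ∈ X₁ ∪ X₂ ∪ X₃ ∧ v ∈ X₁ ∪ X₂ ∪ X₃) ∧
    (∀ v ∈ X₁ ∪ X₂ ∪ X₃,
      (((X₁ ∪ X₂ ∪ X₃).card : ℝ) - 1) - c ≤ (degIn H (X₁ ∪ X₂ ∪ X₃) v : ℝ)) ∧
    (∀ u ∈ X₁, ∀ v ∈ X₃, H.Adj u v → ExclColour G₁ G₂ G₃ u v) ∧
    (∀ u ∈ X₂, ∀ v ∈ X₃, H.Adj u v → ExclColour G₂ G₁ G₃ u v) ∧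
    (∀ u ∈ X₃, ∀ v ∈ X₃, H.Adj u v → ExclColour G₃ G₁ G₂ u v)

/-- The three-multicoloured graph with colour subgraphs `G₁, G₂, G₃` (red, blue, green)
contains a subgraph from the class `K*(x₁, x₂, y₁, y₂, z, c)`. -/
def ContainsClassKstar {V : Type*} [DecidableEq V] (G₁ G₂ G₃ : SimpleGraph V)
    (x₁ x₂ y₁ y₂ z c : ℝ) : Prop :=
  ∃ (H : SimpleGraph V) (X₁ X₂ Y₁ Y₂ : Finset V),
    H ≤ G₁ ⊔ G₂ ⊔ G₃ ∧
    Disjoint X₁ X₂ ∧ Disjoint X₁ Y₁ ∧ Disjoint X₁ Y₂ ∧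
    Disjoint X₂ Y₁ ∧ Disjoint X₂ Y₂ ∧ Disjoint Y₁ Y₂ ∧
    x₁ ≤ (X₁.card : ℝ) ∧ x₂ ≤ (X₂.card : ℝ) ∧ y₁ ≤ (Y₁.card : ℝ) ∧ y₂ ≤ (Y₂.card : ℝ) ∧
    z ≤ (Y₁.card : ℝ) + (Y₂.card : ℝ) ∧
    (∀ u v : V, H.Adj u v → u ∈ X₁ ∪ X₂ ∪ Y₁ ∪ Y₂ ∧ v ∈ X₁ ∪ X₂ ∪ Y₁ ∪ Y₂) ∧
    (∀ v ∈ X₁ ∪ X₂ ∪ Y₁ ∪ Y₂,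
      (((X₁ ∪ X₂ ∪ Y₁ ∪ Y₂).card : ℝ) - 1) - c ≤ (degIn H (X₁ ∪ X₂ ∪ Y₁ ∪ Y₂) v : ℝ)) ∧
    (∀ u ∈ X₁, ∀ v ∈ Y₁, H.Adj u v → ExclColour G₁ G₂ G₃ u v) ∧
    (∀ u ∈ X₂, ∀ v ∈ Y₂, H.Adj u v → ExclColour G₁ G₂ G₃ u v) ∧
    (∀ u ∈ X₁, ∀ v ∈ Y₂, H.Adj u v → ExclColour G₂ G₁ G₃ u v) ∧
    (∀ u ∈ X₂, ∀ v ∈ Y₁, H.Adj u v → ExclColour G₂ G₁ G₃ u v) ∧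
    (∀ u ∈ X₁, ∀ v ∈ X₂, H.Adj u v → ExclColour G₃ G₁ G₂ u v) ∧
    (∀ u ∈ Y₁, ∀ v ∈ Y₂, H.Adj u v → ExclColour G₃ G₁ G₂ u v)

set_option linter.unusedSectionVars false
set_option linter.unusedVariables false
set_option maxHeartbeats 1000000

namespace DiracAux
variable {V : Type*} [Fintype V] [DecidableEq V]

lemma getElem_congr_idx {l : List V} {i j : ℕ} (h : i = j) (hi : i < l.length) :
    l[i] = l[j]'(h ▸ hi) := by subst h; rfl

def HasUV (u v : V) (l : List V) : Prop :=
  ∃ j, ∃ h : j + 1 < l.length,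
    (l[j]'(by omega) = u ∧ l[j+1]'h = v) ∨ (l[j]'(by omega) = v ∧ l[j+1]'h = u)

def GoodL (H : SimpleGraph V) (u v : V) (l : List V) : Prop :=
  l.Chain' H.Adj ∧ l.Nodup ∧ HasUV u v l

lemma head?_eq (l : List V) (h : l ≠ []) :
    l.head? = some (l[0]'(List.length_pos_iff.mpr h)) := by
  rw [List.head?_eq_head h, List.head_eq_getElem]

lemma getLast?_eq (l : List V) (h : l ≠ []) :
    l.getLast? = some (l[l.length - 1]'(by have := List.length_pos_iff.mpr h; omega)) := by
  rw [List.getLast?_eq_getLast h, List.getLast_eq_getElem]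

lemma rot_length (l : List V) (k : ℕ) (hk : k ≤ l.length) :
    (l.drop k ++ l.take k).length = l.length := by
  simp; omega

lemma rot_getElem_lt (l : List V) (k i : ℕ) (hk : k ≤ l.length) (hi : i < l.length - k) :
    (l.drop k ++ l.take k)[i]'(by simp; omega) = l[k+i]'(by omega) := by
  rw [List.getElem_append_left (by simp; omega)]
  exact List.getElem_drop

lemma rot_getElem_ge (l : List V) (k i : ℕ) (hk : k ≤ l.length) (hi : l.length - k ≤ i)
    (hi2 : i < l.length) :
    (l.drop k ++ l.take k)[i]'(by simp; omega) = l[i - (l.length - k)]'(by omega) := by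
  rw [List.getElem_append_right (by simp; omega)]
  simp only [List.length_drop]
  exact List.getElem_take

lemma rot_perm (l : List V) (k : ℕ) : (l.drop k ++ l.take k).Perm l := by
  have h : (l.drop k ++ l.take k).Perm (l.take k ++ l.drop k) := List.perm_append_comm
  rwa [List.take_append_drop] at h

lemma rot_chain' {H : SimpleGraph V} {l : List V} (hc : l.Chain' H.Adj) (hne : l ≠ [])
    (hw : H.Adj (l[l.length - 1]'(by have := List.length_pos_iff.mpr hne; omega))
      (l[0]'(List.length_pos_iff.mpr hne))) (k : ℕ) (hk : k ≤ l.length) :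
    (l.drop k ++ l.take k).Chain' H.Adj := by
  rcases Nat.eq_zero_or_pos k with rfl | hk0
  · simpa using hc
  rcases eq_or_lt_of_le hk with rfl | hklt
  · simpa using hc
  refine List.isChain_append.mpr ⟨hc.drop k, hc.take k, ?_⟩
  intro x hx y hy
  have hdne : l.drop k ≠ [] := List.length_pos_iff.mp (by simp; omega)
  have htne : l.take k ≠ [] := List.length_pos_iff.mp (by simp; omega)
  rw [getLast?_eq _ hdne] at hx
  rw [head?_eq _ htne] at hy
  simp only [Option.mem_some_iff] at hx hy
  subst hx; subst hy
  have e1 : (l.drop k)[(l.drop k).length - 1]'(by have := List.length_pos_iff.mpr hdne; omega)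
      = l[l.length - 1]'(Nat.sub_lt (Nat.lt_of_le_of_lt (Nat.zero_le k) hklt) Nat.one_pos) := by
    rw [List.getElem_drop]
    congr 1
    simp
    omega
  have e2 : (l.take k)[0]'(List.length_pos_iff.mpr htne) = l[0]'(by omega) := by
    rw [List.getElem_take]
  rw [e1, e2]
  exact hw

lemma cons_hasUV {u v x : V} {l : List V} (h : HasUV u v l) : HasUV u v (x :: l) := by
  obtain ⟨j, hj, hor⟩ := h
  exact ⟨j+1, by simp; omega, by simpa only [List.getElem_cons_succ] using hor⟩

lemma append_hasUV {u v x : V} {l : List V} (h : HasUV u v l) : HasUV u v (l ++ [x]) := by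
  obtain ⟨j, hj, hor⟩ := h
  refine ⟨j, by simp; omega, ?_⟩
  have e1 : (l ++ [x])[j]'(by simp; omega) = l[j]'(by omega) :=
    List.getElem_append_left (by omega)
  have e2 : (l ++ [x])[j+1]'(by simp; omega) = l[j+1]'(by omega) :=
    List.getElem_append_left (by omega)
  rw [e1, e2]; exact hor

lemma rot_hasUV {u v : V} {C : List V} {j k : ℕ} (hj : j + 1 < C.length)
    (hor : (C[j]'(by omega) = u ∧ C[j+1]'hj = v) ∨ (C[j]'(by omega) = v ∧ C[j+1]'hj = u))
    (hk : k ≤ C.length) (hcase : k ≤ j ∨ j + 1 < k) :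
    HasUV u v (C.drop k ++ C.take k) := by
  rcases hcase with h1 | h2
  · refine ⟨j - k, by rw [rot_length _ _ hk]; omega, ?_⟩
    have e1 : (C.drop k ++ C.take k)[j-k]'(by rw [rot_length _ _ hk]; omega)
        = C[j]'(by omega) := by
      rw [rot_getElem_lt C k (j-k) hk (by omega)]
      exact getElem_congr_idx (by omega) (by omega)
    have e2 : (C.drop k ++ C.take k)[j-k+1]'(by rw [rot_length _ _ hk]; omega)
        = C[j+1]'hj := by
      rw [rot_getElem_lt C k (j-k+1) hk (by omega)]
      exact getElem_congr_idx (by omega) (by omega)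
    rw [e1, e2]; exact hor
  · refine ⟨C.length - k + j, by rw [rot_length _ _ hk]; omega, ?_⟩
    have e1 : (C.drop k ++ C.take k)[C.length - k + j]'(by rw [rot_length _ _ hk]; omega)
        = C[j]'(by omega) := by
      rw [rot_getElem_ge C k _ hk (by omega) (by omega)]
      exact getElem_congr_idx (by omega) (by omega)
    have e2 : (C.drop k ++ C.take k)[C.length - k + j + 1]'(by rw [rot_length _ _ hk]; omega)
        = C[j+1]'hj := by
      rw [rot_getElem_ge C k _ hk (by omega) (by omega)]
      exact getElem_congr_idx (by omega) (by omega)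
    rw [e1, e2]; exact hor

lemma cyc_done {H : SimpleGraph V} {u v : V} (C : List V) (hnd : C.Nodup)
    (hch : C.Chain' H.Adj) (hCne : C ≠ [])
    (hwrap : H.Adj (C[C.length - 1]'(by have := List.length_pos_iff.mpr hCne; omega))
      (C[0]'(List.length_pos_iff.mpr hCne)))
    (hcov : ∀ x, x ∈ C) (j : ℕ) (hj : j + 1 < C.length)
    (hv : C[j]'(by omega) = v) (hu : C[j+1]'hj = u) :
    ∃ l : List V, l.Chain' H.Adj ∧ l.Nodup ∧ (∀ x, x ∈ l) ∧
      ∃ hne : l ≠ [], l.head hne = u ∧ l.getLast hne = v := by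
  have hperm := rot_perm C (j+1)
  have hlen : (C.drop (j+1) ++ C.take (j+1)).length = C.length := rot_length _ _ (by omega)
  refine ⟨C.drop (j+1) ++ C.take (j+1), rot_chain' hch hCne hwrap (j+1) (by omega),
    hperm.nodup_iff.mpr hnd, fun x => hperm.mem_iff.mpr (hcov x),
    List.length_pos_iff.mp (by rw [hlen]; omega), ?_, ?_⟩
  · rw [List.head_eq_getElem]
    rw [rot_getElem_lt C (j+1) 0 (by omega) (by omega)]
    exact (getElem_congr_idx (by omega) (by omega)).trans hu
  · rw [List.getLast_eq_getElem]
    rw [rot_getElem_ge C (j+1) _ (by omega) (by rw [hlen]; omega) (by rw [hlen]; omega)]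
    exact (getElem_congr_idx (by rw [hlen]; omega) (by omega)).trans hv


lemma exists_max (H : SimpleGraph V) (u v : V) (hex : ∃ l, GoodL H u v l) :
    ∃ P, GoodL H u v P ∧ ∀ l, GoodL H u v l → l.length ≤ P.length := by
  classical
  have hbd : ∀ l, GoodL H u v l → l.length ≤ Fintype.card V :=
    fun l h => h.2.1.length_le_card
  obtain ⟨l0, h0⟩ := hex
  let Q : ℕ → Prop := fun m => ∃ l, GoodL H u v l ∧ l.length = m
  have hQ : Q l0.length := ⟨l0, h0, rfl⟩
  have hspec : Q (Nat.findGreatest Q (Fintype.card V)) :=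
    Nat.findGreatest_spec (hbd _ h0) hQ
  obtain ⟨P, hP, hPlen⟩ := hspec
  refine ⟨P, hP, fun l hl => ?_⟩
  rw [hPlen]
  by_contra hlt
  exact Nat.findGreatest_is_greatest (P := Q) (by omega) (hbd _ hl) ⟨l, hl, rfl⟩


lemma ndeg_mono {G H : SimpleGraph V} (h : G ≤ H) (x : V) : ndeg G x ≤ ndeg H x :=
  Set.ncard_le_ncard (fun t ht => h ht) (Set.toFinite _)

lemma common_nbr {H : SimpleGraph V} (hdeg : ∀ x, Fintype.card V + 2 ≤ 2 * ndeg H x)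
    (x y : V) : ∃ c, H.Adj x c ∧ H.Adj y c := by
  have h1 : ({t | H.Adj x t} ∩ {t | H.Adj y t}).ncard + ({t | H.Adj x t} ∪ {t | H.Adj y t}).ncard
      = ndeg H x + ndeg H y :=
    Set.ncard_inter_add_ncard_union _ _ (Set.toFinite _) (Set.toFinite _)
  have h2 : ({t | H.Adj x t} ∪ {t | H.Adj y t}).ncard ≤ Fintype.card V := by
    simpa [Set.ncard_univ] using Set.ncard_le_ncard
      (Set.subset_univ ({t | H.Adj x t} ∪ {t | H.Adj y t})) (Set.toFinite _)
  have hx := hdeg x; have hy := hdeg y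
  obtain ⟨c, hc⟩ : ({t | H.Adj x t} ∩ {t | H.Adj y t}).Nonempty :=
    Set.nonempty_of_ncard_ne_zero (by omega)
  exact ⟨c, hc.1, hc.2⟩

lemma exists_walk {H : SimpleGraph V} : ∀ (l : List V) (hne : l ≠ []), l.Chain' H.Adj →
    ∃ w : H.Walk (l.head hne) (l.getLast hne), w.support = l
  | [], hne, _ => absurd rfl hne
  | [x], _, _ => ⟨SimpleGraph.Walk.nil, by simp⟩
  | x :: y :: s, _, hc => by
    obtain ⟨hxy, hc'⟩ := List.isChain_cons_cons.mp hc
    obtain ⟨w', hw'⟩ := exists_walk (y :: s) (by simp) hc'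
    refine ⟨(SimpleGraph.Walk.cons hxy w').copy rfl (List.getLast_cons (by simp)).symm, ?_⟩
    exact congrArg (List.cons x) hw'

lemma core (H : SimpleGraph V) (u v : V) (hn : 4 ≤ Fintype.card V)
    (hdegH : ∀ x, Fintype.card V + 2 ≤ 2 * ndeg H x) (hadj : H.Adj u v) :
    ∃ l : List V, l.Chain' H.Adj ∧ l.Nodup ∧ (∀ x, x ∈ l) ∧
      ∃ hne : l ≠ [], l.head hne = u ∧ l.getLast hne = v := by
  classical
  set n := Fintype.card V with hn_def
  have hexists : ∃ l, GoodL H u v l := by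
    refine ⟨[u, v], List.isChain_pair.mpr hadj, by simp [hadj.ne], 0, by norm_num, Or.inl ⟨rfl, rfl⟩⟩
  obtain ⟨P, ⟨hch, hnd, hUV⟩, hmax⟩ := exists_max H u v hexists
  obtain ⟨p, hp⟩ : ∃ p, P.length = p := ⟨_, rfl⟩
  have hp2 : 2 ≤ p := by obtain ⟨j, hj, -⟩ := hUV; omega
  have hpn : p ≤ n := hp ▸ hnd.length_le_card
  have hPne : P ≠ [] := by intro h; rw [h] at hp; simp at hp; omega
  obtain ⟨a, ha⟩ : ∃ a, P[0]'(by omega) = a := ⟨_, rfl⟩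
  obtain ⟨b, hb⟩ : ∃ b, P[p-1]'(by omega) = b := ⟨_, rfl⟩
  -- maximality implies all neighbours of the endpoints lie on P
  have hsubA : ∀ x, H.Adj a x → x ∈ P := by
    intro x hx
    by_contra hxP
    have hgood : GoodL H u v (x :: P) := by
      refine ⟨List.isChain_cons.mpr ⟨?_, hch⟩, List.nodup_cons.mpr ⟨hxP, hnd⟩, ?_⟩
      · intro y hy
        rw [head?_eq _ hPne] at hy
        simp only [Option.mem_some_iff] at hy
        subst hy
        have : P[0]'(by omega) = a := ha
        rw [this]
        exact hx.symm
      · obtain ⟨j, hj, hor⟩ := hUV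
        refine ⟨j+1, by simp; omega, ?_⟩
        simpa only [List.getElem_cons_succ] using hor
    have h2 : P.length + 1 ≤ P.length := by simpa using hmax _ hgood
    omega
  have hsubB : ∀ x, H.Adj b x → x ∈ P := by
    intro x hx
    by_contra hxP
    have hgood : GoodL H u v (P ++ [x]) := by
      refine ⟨List.isChain_append.mpr ⟨hch, List.isChain_singleton x, ?_⟩, ?_, ?_⟩
      · intro y hy z hz
        rw [getLast?_eq _ hPne] at hy
        simp only [Option.mem_some_iff, List.head?_cons] at hy hz
        subst hy; subst hz
        have e : P[P.length - 1]'(by omega) = b := by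
          rw [← hb]; exact getElem_congr_idx (by omega) (by omega)
        rw [e]
        exact hx
      · simp [List.nodup_append, hnd, hxP]
        exact fun a ha h => hxP (h ▸ ha)
      · obtain ⟨j, hj, hor⟩ := hUV
        refine ⟨j, by simp; omega, ?_⟩
        have e1 : (P ++ [x])[j]'(by simp; omega) = P[j]'(by omega) :=
          List.getElem_append_left (by omega)
        have e2 : (P ++ [x])[j+1]'(by simp; omega) = P[j+1]'(by omega) :=
          List.getElem_append_left (by omega)
        rw [e1, e2]; exact hor
    have h2 : P.length + 1 ≤ P.length := by simpa using hmax _ hgood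
    omega
  -- the two crossing index sets
  let A := (Finset.range (p-1)).filter (fun i => H.Adj a (P.getD (i+1) a))
  let B := (Finset.range (p-1)).filter (fun i => H.Adj b (P.getD i a))
  have hAmem : ∀ i (hilt : i < p - 1), (i ∈ A ↔ H.Adj a (P[i+1]'(by omega))) := by
    intro i h
    simp only [A, Finset.mem_filter, Finset.mem_range]
    rw [List.getD_eq_getElem _ _ (by omega : i+1 < P.length)]
    tauto
  have hBmem : ∀ i (hilt : i < p - 1), (i ∈ B ↔ H.Adj b (P[i]'(by omega))) := by
    intro i h
    simp only [B, Finset.mem_filter, Finset.mem_range]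
    rw [List.getD_eq_getElem _ _ (by omega : i < P.length)]
    tauto
  have keyA : ∀ x, H.Adj a x → ∃ h : P.idxOf x < P.length,
      1 ≤ P.idxOf x ∧ P[P.idxOf x]'h = x := by
    intro x hx
    have hxP : x ∈ P := hsubA x hx
    have hidx : P.idxOf x < P.length := List.idxOf_lt_length_iff.mpr hxP
    have hget : P[P.idxOf x]'hidx = x := List.getElem_idxOf hidx
    refine ⟨hidx, ?_, hget⟩
    by_contra h0
    have h00 : P.idxOf x = 0 := by omega
    have : a = x := by rw [← ha, ← hget]; exact getElem_congr_idx h00.symm (by omega)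
    exact hx.ne this
  have keyB : ∀ x, H.Adj b x → ∃ h : P.idxOf x < P.length,
      P.idxOf x < p - 1 ∧ P[P.idxOf x]'h = x := by
    intro x hx
    have hxP : x ∈ P := hsubB x hx
    have hidx : P.idxOf x < P.length := List.idxOf_lt_length_iff.mpr hxP
    have hget : P[P.idxOf x]'hidx = x := List.getElem_idxOf hidx
    refine ⟨hidx, ?_, hget⟩
    by_contra h0
    have h00 : P.idxOf x = p - 1 := by omega
    have : b = x := by rw [← hb, ← hget]; exact getElem_congr_idx h00.symm (by omega)
    exact hx.ne this
  have hcardA : ndeg H a ≤ A.card := by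
    rw [← Set.ncard_coe_finset]
    apply Set.ncard_le_ncard_of_injOn (fun x => P.idxOf x - 1) ?_ ?_ (Set.toFinite _)
    · intro x hx
      simp only [Set.mem_setOf_eq] at hx
      obtain ⟨hidx, h1, hget⟩ := keyA x hx
      have hmem : P.idxOf x - 1 ∈ A := by
        rw [hAmem _ (by omega)]
        have e : P[P.idxOf x - 1 + 1]'(by omega) = x :=
          (getElem_congr_idx (show P.idxOf x - 1 + 1 = P.idxOf x by omega) (by omega)).trans hget
        rw [e]; exact hx
      exact hmem
    · intro x hx y hy hxy
      simp only [Set.mem_setOf_eq] at hx hy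
      obtain ⟨hix, h1x, hgx⟩ := keyA x hx
      obtain ⟨hiy, h1y, hgy⟩ := keyA y hy
      simp only at hxy
      have : P.idxOf x = P.idxOf y := by omega
      rw [← hgx, ← hgy]
      exact getElem_congr_idx this _
  have hcardB : ndeg H b ≤ B.card := by
    rw [← Set.ncard_coe_finset]
    apply Set.ncard_le_ncard_of_injOn (fun x => P.idxOf x) ?_ ?_ (Set.toFinite _)
    · intro x hx
      simp only [Set.mem_setOf_eq] at hx
      obtain ⟨hidx, h1, hget⟩ := keyB x hx
      have hmem : P.idxOf x ∈ B := by
        rw [hBmem _ (by omega), hget]; exact hx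
      exact hmem
    · intro x hx y hy hxy
      simp only [Set.mem_setOf_eq] at hx hy
      obtain ⟨hix, h1x, hgx⟩ := keyB x hx
      obtain ⟨hiy, h1y, hgy⟩ := keyB y hy
      simp only at hxy
      rw [← hgx, ← hgy]
      exact getElem_congr_idx hxy _
  have hABcard : 3 ≤ (A ∩ B).card := by
    have h1 : (A ∪ B).card ≤ p - 1 := by
      calc (A ∪ B).card ≤ (Finset.range (p-1)).card :=
            Finset.card_le_card (Finset.union_subset (Finset.filter_subset _ _)
              (Finset.filter_subset _ _))
        _ = p - 1 := Finset.card_range _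
    have h2 : (A ∪ B).card + (A ∩ B).card = A.card + B.card :=
      Finset.card_union_add_card_inter A B
    have hda := hdegH a
    have hdb := hdegH b
    omega
  -- pick a crossing index avoiding the u-v pair
  have hbadne : ((A ∩ B) \ {P.idxOf u, P.idxOf u - 1}).Nonempty := by
    rw [← Finset.card_pos]
    have h1 : ({P.idxOf u, P.idxOf u - 1} : Finset ℕ).card ≤ 2 := by
      apply le_trans (Finset.card_insert_le _ _); simp
    have h2 := Finset.le_card_sdiff ({P.idxOf u, P.idxOf u - 1} : Finset ℕ) (A ∩ B)
    omega
  obtain ⟨i, hi⟩ := hbadne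
  rw [Finset.mem_sdiff, Finset.mem_inter] at hi
  obtain ⟨⟨hiA', hiB'⟩, hibad⟩ := hi
  have hilt : i < p - 1 := Finset.mem_range.mp (Finset.filter_subset _ _ hiA')
  have hiA : H.Adj a (P[i+1]'(by omega)) := (hAmem i hilt).mp hiA'
  have hiB : H.Adj b (P[i]'(by omega)) := (hBmem i hilt).mp hiB'
  have hnotuv : ¬ ((P[i]'(by omega) = u ∧ P[i+1]'(by omega) = v) ∨
      (P[i]'(by omega) = v ∧ P[i+1]'(by omega) = u)) := by
    have huP : ∀ k (hk : k < P.length), P[k]'hk = u → P.idxOf u = k := by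
      intro k hk hke
      have hmem : u ∈ P := by rw [← hke]; exact List.getElem_mem _
      have hidx : P.idxOf u < P.length := List.idxOf_lt_length_iff.mpr hmem
      have hget : P[P.idxOf u]'hidx = u := List.getElem_idxOf hidx
      exact hnd.getElem_inj_iff.mp (by rw [hget, hke])
    rintro (⟨h1, h2⟩ | ⟨h1, h2⟩)
    · have := huP i (by omega) h1
      apply hibad
      rw [Finset.mem_insert, Finset.mem_singleton]
      omega
    · have := huP (i+1) (by omega) h2
      apply hibad
      rw [Finset.mem_insert, Finset.mem_singleton]
      omega

  -- build the crossed cycle C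
  set C := P.take (i+1) ++ (P.drop (i+1)).reverse with hC_def
  have hCperm : C.Perm P := by
    have h1 : (P.take (i+1) ++ (P.drop (i+1)).reverse).Perm (P.take (i+1) ++ P.drop (i+1)) :=
      List.Perm.append_left _ (List.reverse_perm _)
    rw [List.take_append_drop] at h1
    exact h1
  have hClen : C.length = p := hCperm.length_eq.trans hp
  have hCnd : C.Nodup := hCperm.nodup_iff.mpr hnd
  have hCne : C ≠ [] := List.length_pos_iff.mp (by omega)
  have hCget_le : ∀ i' (h : i' ≤ i), C[i']'(by omega) = P[i']'(by omega) := by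
    intro i' h
    show (P.take (i+1) ++ (P.drop (i+1)).reverse)[i']'(by simp; omega) = P[i']'(by omega)
    rw [List.getElem_append_left (by simp; omega)]
    exact List.getElem_take
  have hCget_gt : ∀ i' (h1 : i < i') (h2 : i' < p), C[i']'(by omega) = P[p+i-i']'(by omega) := by
    intro i' h1 h2
    show (P.take (i+1) ++ (P.drop (i+1)).reverse)[i']'(by simp; omega) = P[p+i-i']'(by omega)
    rw [List.getElem_append_right (by simp; omega)]
    rw [List.getElem_reverse]
    rw [List.getElem_drop]
    exact getElem_congr_idx (by simp; omega) (by simp; omega)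
  have hflip : flip H.Adj = H.Adj := by
    ext x y
    exact ⟨fun h => h.symm, fun h => h.symm⟩
  have hCchain : C.Chain' H.Adj := by
    show (P.take (i+1) ++ (P.drop (i+1)).reverse).Chain' H.Adj
    refine List.isChain_append.mpr ⟨hch.take _, ?_, ?_⟩
    · rw [List.isChain_reverse, show (fun a b => H.Adj b a) = H.Adj from hflip]
      exact hch.drop _
    · intro y hy z hz
      have htne : P.take (i+1) ≠ [] := List.length_pos_iff.mp (by simp; omega)
      have hdne : (P.drop (i+1)).reverse ≠ [] := List.length_pos_iff.mp (by simp; omega)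
      rw [getLast?_eq _ htne] at hy
      rw [head?_eq _ hdne] at hz
      simp only [Option.mem_some_iff] at hy hz
      subst hy; subst hz
      have e1 : (P.take (i+1))[(P.take (i+1)).length - 1]'(by simp; omega)
          = P[i]'(by omega) := by
        rw [List.getElem_take]
        exact getElem_congr_idx (by simp; omega) (by simp; omega)
      have e2 : ((P.drop (i+1)).reverse)[0]'(by simp; omega) = b := by
        rw [List.getElem_reverse]
        rw [List.getElem_drop]
        exact (getElem_congr_idx (by simp; omega) (by simp; omega)).trans hb
      rw [e1, e2]
      exact hiB.symm
  have hCwrap : H.Adj (C[C.length - 1]'(by omega)) (C[0]'(by omega)) := by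
    have e1 : C[C.length - 1]'(by omega) = P[i+1]'(by omega) := by
      calc C[C.length - 1]'(by omega) = C[p-1]'(by omega) :=
            getElem_congr_idx (by omega) (by omega)
        _ = P[p+i-(p-1)]'(by omega) := hCget_gt (p-1) (by omega) (by omega)
        _ = P[i+1]'(by omega) := getElem_congr_idx (by omega) (by omega)
    have e0 : C[0]'(by omega) = a := (hCget_le 0 (by omega)).trans ha
    rw [e1, e0]
    exact hiA.symm
  have hCuv : HasUV u v C := by
    obtain ⟨j, hj, hor⟩ := hUV
    have hjp : j + 1 < p := by omega
    have hjne : j ≠ i := by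
      intro h
      subst h
      exact hnotuv hor
    rcases Nat.lt_or_ge j i with hlt | hge
    · refine ⟨j, by omega, ?_⟩
      rw [hCget_le j (by omega), hCget_le (j+1) (by omega)]
      exact hor
    · refine ⟨p+i-j-1, by omega, ?_⟩
      have e1 : C[p+i-j-1]'(by omega) = P[j+1]'(by omega) := by
        rw [hCget_gt _ (by omega) (by omega)]
        exact getElem_congr_idx (by omega) (by omega)
      have e2 : C[p+i-j-1+1]'(by omega) = P[j]'(by omega) := by
        rw [hCget_gt _ (by omega) (by omega)]
        exact getElem_congr_idx (by omega) (by omega)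
      rw [e1, e2]
      tauto
  by_cases hcov : ∀ x, x ∈ C
  · -- the cycle is Hamiltonian: extract the desired path
    obtain ⟨j, hj, hor⟩ := hCuv
    rcases hor with ⟨h1, h2⟩ | ⟨h1, h2⟩
    · -- pair is oriented (u,v): use the reversed cycle
      have hrevne : C.reverse ≠ [] := by simpa using hCne
      have hrevnd : C.reverse.Nodup := by simpa using hCnd
      have hrevch : C.reverse.Chain' H.Adj := by
        unfold List.Chain'
        rw [List.isChain_reverse, show (fun a b => H.Adj b a) = H.Adj from hflip]
        exact hCchain
      have hrevwrap : H.Adj (C.reverse[C.reverse.length - 1]'(by simp; omega))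
          (C.reverse[0]'(by simp; omega)) := by
        have e1 : C.reverse[C.reverse.length - 1]'(by simp; omega) = C[0]'(by omega) := by
          rw [List.getElem_reverse]
          exact getElem_congr_idx (by simp) _
        have e2 : C.reverse[0]'(by simp; omega) = C[C.length - 1]'(by omega) := by
          rw [List.getElem_reverse]
          exact getElem_congr_idx (by simp) _
        rw [e1, e2]
        exact hCwrap.symm
      refine cyc_done (H := H) C.reverse hrevnd hrevch hrevne hrevwrap
        (fun x => by simpa using hcov x) (C.length - 2 - j) (by simp; omega) ?_ ?_
      · rw [List.getElem_reverse]
        exact (getElem_congr_idx (by omega) (by omega)).trans h2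
      · rw [List.getElem_reverse]
        exact (getElem_congr_idx (by omega) (by omega)).trans h1
    · exact cyc_done C hCnd hCchain hCne hCwrap hcov j hj h1 h2
  · -- not spanning: we can produce a longer good list, contradiction
    exfalso
    push_neg at hcov
    obtain ⟨w0, hw0⟩ := hcov
    have hC0 : C[0]'(by omega) ∈ C := List.getElem_mem _
    obtain ⟨c, hc1, hc2⟩ := common_nbr hdegH w0 (C[0]'(by omega))
    obtain ⟨z, w, hzC, hwC, hzw⟩ : ∃ z w, z ∈ C ∧ w ∉ C ∧ H.Adj z w := by
      by_cases hcC : c ∈ C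
      · exact ⟨c, w0, hcC, hw0, hc1.symm⟩
      · exact ⟨C[0]'(by omega), c, hC0, hcC, hc2⟩
    have hizlt : C.idxOf z < C.length := List.idxOf_lt_length_iff.mpr hzC
    have hgz : C[C.idxOf z]'hizlt = z := List.getElem_idxOf hizlt
    obtain ⟨j, hj, hor⟩ := hCuv
    by_cases hcase : C.idxOf z = j + 1
    · -- rotate so that z is last, then append w
      have hk : C.idxOf z + 1 ≤ C.length := by omega
      have hrot := rot_chain' hCchain hCne hCwrap (C.idxOf z + 1) hk
      have hrotperm := rot_perm C (C.idxOf z + 1)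
      have hrotlen := rot_length C (C.idxOf z + 1) hk
      have hrotne : C.drop (C.idxOf z + 1) ++ C.take (C.idxOf z + 1) ≠ [] :=
        List.length_pos_iff.mp (by rw [hrotlen]; omega)
      have hlast : (C.drop (C.idxOf z + 1) ++ C.take (C.idxOf z + 1))[
          (C.drop (C.idxOf z + 1) ++ C.take (C.idxOf z + 1)).length - 1]'(by
            rw [hrotlen]; omega) = z := by
        rw [rot_getElem_ge C _ _ hk (by rw [hrotlen]; omega) (by rw [hrotlen]; omega)]
        exact (getElem_congr_idx (by rw [hrotlen]; omega) (by omega)).trans hgz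
      have hgood : GoodL H u v ((C.drop (C.idxOf z + 1) ++ C.take (C.idxOf z + 1)) ++ [w]) := by
        refine ⟨List.isChain_append.mpr ⟨hrot, List.isChain_singleton _, ?_⟩, ?_,
          append_hasUV (rot_hasUV hj hor hk (Or.inr (by omega)))⟩
        · intro y hy x2 hx2
          rw [getLast?_eq _ hrotne] at hy
          simp only [Option.mem_some_iff, List.head?_cons] at hy hx2
          subst hy; subst hx2
          rw [hlast]
          exact hzw
        · rw [List.nodup_append]
          refine ⟨hrotperm.nodup_iff.mpr hCnd, by simp, ?_⟩
          intro t ht b hb hts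
          simp only [List.mem_singleton] at hb
          subst hb hts
          exact hwC (hrotperm.mem_iff.mp ht)
      have hcon := hmax _ hgood
      rw [List.length_append, hrotlen, hClen] at hcon
      simp at hcon
      omega
    · -- rotate so that z is first, then prepend w
      have hk : C.idxOf z ≤ C.length := le_of_lt hizlt
      have hrot := rot_chain' hCchain hCne hCwrap (C.idxOf z) hk
      have hrotperm := rot_perm C (C.idxOf z)
      have hrotlen := rot_length C (C.idxOf z) hk
      have hhead : (C.drop (C.idxOf z) ++ C.take (C.idxOf z))[0]'(by
          rw [hrotlen]; omega) = z := by
        rw [rot_getElem_lt C _ _ hk (by omega)]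
        exact (getElem_congr_idx (by omega) (by omega)).trans hgz
      have hgood : GoodL H u v (w :: (C.drop (C.idxOf z) ++ C.take (C.idxOf z))) := by
        refine ⟨List.isChain_cons.mpr ⟨?_, hrot⟩,
          List.nodup_cons.mpr ⟨?_, hrotperm.nodup_iff.mpr hCnd⟩,
          cons_hasUV (rot_hasUV hj hor hk ?_)⟩
        · intro y hy
          rw [head?_eq _ (List.length_pos_iff.mp (by rw [hrotlen]; omega))] at hy
          simp only [Option.mem_some_iff] at hy
          subst hy
          rw [hhead]
          exact hzw.symm
        · intro hmem
          exact hwC (hrotperm.mem_iff.mp hmem)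
        · rcases Nat.lt_or_ge (C.idxOf z) (j+1) with h | h
          · exact Or.inl (by omega)
          · exact Or.inr (by omega)
      have hcon := hmax _ hgood
      rw [List.length_cons, hrotlen, hClen] at hcon
      omega


end DiracAux

open DiracAux

/-- If every vertex of a graph on `n ≥ 4` vertices has degree at least `n/2 + 1`, then any two
distinct vertices are joined by a Hamiltonian path. -/
theorem dirac_hamiltonian_path {V : Type*} [Fintype V] [DecidableEq V] (G : SimpleGraph V)
    (hn : 4 ≤ Fintype.card V)
    (hdeg : ∀ v : V, (Fintype.card V : ℝ) / 2 + 1 ≤ (ndeg G v : ℝ))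
    (u v : V) (huv : u ≠ v) :
    ∃ p : G.Walk u v, p.IsHamiltonian := by
  classical
  set H := G ⊔ SimpleGraph.fromEdgeSet {s(u,v)} with hH_def
  have hGH : G ≤ H := le_sup_left
  have hadj : H.Adj u v := by
    rw [hH_def, SimpleGraph.sup_adj]
    right
    rw [SimpleGraph.fromEdgeSet_adj]
    exact ⟨Set.mem_singleton _, huv⟩
  have hdegH : ∀ x, Fintype.card V + 2 ≤ 2 * ndeg H x := by
    intro x
    have h1 := hdeg x
    have h2 : (Fintype.card V : ℝ) + 2 ≤ 2 * (ndeg G x : ℝ) := by linarith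
    have h3 : Fintype.card V + 2 ≤ 2 * ndeg G x := by exact_mod_cast h2
    have h4 := ndeg_mono hGH x
    omega
  obtain ⟨l, hch', hnd, hcov, hne, hhead, hlast⟩ := core H u v hn hdegH hadj
  have hlen : l.length = Fintype.card V := by
    have h5 : Fintype.card V ≤ l.length := by
      have h6 : l.toFinset = Finset.univ :=
        Finset.eq_univ_iff_forall.mpr fun x => List.mem_toFinset.mpr (hcov x)
      calc Fintype.card V = l.toFinset.card := by rw [h6, Finset.card_univ]
        _ ≤ l.length := l.toFinset_card_le
    exact le_antisymm hnd.length_le_card h5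
  have hu0 : l[0]'(by have := List.length_pos_iff.mpr hne; omega) = u := by
    rw [← hhead]
    exact (List.head_eq_getElem hne).symm
  have hv0 : l[l.length - 1]'(by have := List.length_pos_iff.mpr hne; omega) = v := by
    rw [← hlast]
    exact (List.getLast_eq_getElem hne).symm
  have hchG : l.Chain' G.Adj := by
    simp only [List.Chain', List.isChain_iff_getElem] at hch' ⊢
    intro k hk
    have hadjH := hch' k hk
    rw [hH_def, SimpleGraph.sup_adj] at hadjH
    rcases hadjH with h | h
    · exact h
    · exfalso
      rw [SimpleGraph.fromEdgeSet_adj] at h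
      obtain ⟨hmem, hne2⟩ := h
      rw [Set.mem_singleton_iff, Sym2.eq_iff] at hmem
      rcases hmem with ⟨h1, h2⟩ | ⟨h1, h2⟩
      · have e1 : k = 0 := hnd.getElem_inj_iff.mp (h1.trans hu0.symm)
        have e2 : k + 1 = l.length - 1 := hnd.getElem_inj_iff.mp (h2.trans hv0.symm)
        omega
      · have e1 : k = l.length - 1 := hnd.getElem_inj_iff.mp (h1.trans hv0.symm)
        omega
  obtain ⟨w, hw⟩ := exists_walk l hne hchG
  refine ⟨w.copy hhead hlast, ?_⟩
  apply SimpleGraph.Walk.IsPath.isHamiltonian_of_mem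
  · rw [SimpleGraph.Walk.isPath_def, SimpleGraph.Walk.support_copy, hw]
    exact hnd
  · intro x
    rw [SimpleGraph.Walk.support_copy, hw]
    exact hcov x
end

section
/- Let G = G[X1, X2] be a simple bipartite graph on n ≥ 4 vertices with parts X1 and X2 such that |X1| > |X2| + 1 and every vertex in X2 has degree at least n/2 + 1. Then any two distinct vertices x1, x2 ∈ X1 with d(x1) ≥ 1 and d(x2) ≥ 2 are joined by a path in G which visits every vertex of X2. -/
open SimpleGraph

private lemma aux_path {V : Type*} [DecidableEq V] (G : SimpleGraph V) (X₁ X₂ : Finset V)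
    (hdisj : Disjoint X₁ X₂) (s : ℕ)
    (hsel : ∀ v ∈ X₂, ∀ w ∈ X₂, v ≠ w → ∀ F : Finset V, F.card ≤ s →
      ∃ u, u ∈ X₁ ∧ G.Adj v u ∧ G.Adj w u ∧ u ∉ F) :
    ∀ (l : List V) (v w : V) (F : Finset V),
      (v :: l ++ [w]).Nodup → (∀ x ∈ v :: l ++ [w], x ∈ X₂) →
      F.card + l.length + 2 ≤ s + 2 →
      ∃ p : G.Walk v w, p.IsPath ∧
        (∀ x ∈ p.support, x ∈ v :: l ++ [w] ∨ (x ∈ X₁ ∧ x ∉ F)) ∧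
        (∀ x ∈ v :: l ++ [w], x ∈ p.support) := by
  intro l
  induction l with
  | nil =>
    intro v w F hnd hmem hcard
    have hv : v ∈ X₂ := hmem v (by simp)
    have hw : w ∈ X₂ := hmem w (by simp)
    have hvw : v ≠ w := by
      intro h; subst h; simp at hnd
    obtain ⟨u, huX, hvu, hwu, huF⟩ := hsel v hv w hw hvw F (by omega)
    have huv : u ≠ v := fun h => (Finset.disjoint_left.1 hdisj huX) (h ▸ hv)
    have huw : u ≠ w := fun h => (Finset.disjoint_left.1 hdisj huX) (h ▸ hw)
    refine ⟨Walk.cons hvu (Walk.cons hwu.symm Walk.nil), ?_, ?_, ?_⟩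
    · rw [Walk.isPath_def]
      simp [hvw, huv.symm, huw]
    · intro x hx
      simp only [Walk.support_cons, Walk.support_nil, List.mem_cons, List.mem_singleton] at hx
      rcases hx with rfl | rfl | rfl | h
      · left; simp
      · right; exact ⟨huX, huF⟩
      · left; simp
      · simp at h
    · intro x hx
      simp only [List.cons_append, List.nil_append, List.mem_cons, List.not_mem_nil,
        or_false] at hx
      rcases hx with rfl | rfl
      · simp
      · simp
  | cons a l ih =>
    intro v w F hnd hmem hcard
    have hv : v ∈ X₂ := hmem v (by simp)
    have ha : a ∈ X₂ := hmem a (by simp)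
    have hva : v ≠ a := by
      intro h; subst h; simp at hnd
    obtain ⟨u, huX, hvu, hau, huF⟩ := hsel v hv a ha hva F (by omega)
    have huX2 : u ∉ X₂ := Finset.disjoint_left.1 hdisj huX
    have htl_nd : (a :: l ++ [w]).Nodup := by
      simp only [List.cons_append, List.nodup_cons] at hnd ⊢
      exact hnd.2
    obtain ⟨p, hp, hsup, hcov⟩ := ih a w (insert u F)
      htl_nd (fun x hx => hmem x (by simp only [List.cons_append, List.mem_cons] at hx ⊢; tauto))
      (by have := Finset.card_insert_le u F; simp only [List.length_cons] at hcard; omega)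
    have hup : u ∉ p.support := by
      intro h
      rcases hsup u h with h1 | h2
      · exact huX2 (hmem u (by simp only [List.cons_append, List.mem_cons] at h1 ⊢; tauto))
      · exact h2.2 (Finset.mem_insert_self u F)
    have hvp : v ∉ p.support := by
      intro h
      rcases hsup v h with h1 | h2
      · simp only [List.cons_append, List.nodup_cons] at hnd
        exact hnd.1 (by simpa using h1)
      · exact Finset.disjoint_left.1 hdisj h2.1 hv
    refine ⟨Walk.cons hvu (Walk.cons hau.symm p), ?_, ?_, ?_⟩
    · refine Walk.IsPath.cons (Walk.IsPath.cons hp hup) ?_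
      simp only [Walk.support_cons, List.mem_cons]
      push_neg
      exact ⟨fun h => huX2 (h ▸ hv), hvp⟩
    · intro x hx
      simp only [Walk.support_cons, List.mem_cons] at hx
      rcases hx with rfl | rfl | h
      · left; simp
      · right; exact ⟨huX, huF⟩
      · rcases hsup x h with h1 | h2
        · left; simp only [List.cons_append, List.mem_cons] at h1 ⊢; tauto
        · right; exact ⟨h2.1, fun hxF => h2.2 (Finset.mem_insert_of_mem hxF)⟩
    · intro x hx
      simp only [Walk.support_cons, List.mem_cons]
      simp only [List.cons_append, List.mem_cons] at hx
      rcases hx with rfl | hx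
      · tauto
      · have : x ∈ p.support := hcov x (by simp only [List.cons_append, List.mem_cons]; tauto)
        tauto

/-- In a bipartite graph on `n ≥ 4` vertices with `|X₁| > |X₂| + 1` in which every vertex of
`X₂` has degree at least `n/2 + 1`, any two distinct vertices `x₁, x₂ ∈ X₁` with `d(x₁) ≥ 1`
and `d(x₂) ≥ 2` are joined by a path visiting every vertex of `X₂`. -/
theorem bipartite_spanning_path {V : Type*} [Fintype V] (G : SimpleGraph V) (X₁ X₂ : Finset V)
    (hdisj : Disjoint X₁ X₂) (hcover : ∀ v : V, v ∈ X₁ ∨ v ∈ X₂)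
    (hbip : ∀ u v : V, G.Adj u v → (u ∈ X₁ ∧ v ∈ X₂) ∨ (u ∈ X₂ ∧ v ∈ X₁))
    (hn : 4 ≤ Fintype.card V)
    (hsize : X₂.card + 1 < X₁.card)
    (hdeg : ∀ v ∈ X₂, (Fintype.card V : ℝ) / 2 + 1 ≤ (ndeg G v : ℝ))
    (x₁ x₂ : V) (hx₁ : x₁ ∈ X₁) (hx₂ : x₂ ∈ X₁) (hne : x₁ ≠ x₂)
    (hd₁ : 1 ≤ ndeg G x₁) (hd₂ : 2 ≤ ndeg G x₂) :
    ∃ p : G.Walk x₁ x₂, p.IsPath ∧ ∀ v ∈ X₂, v ∈ p.support := by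
  classical
  set s := X₂.card with hs
  have hdl := Finset.disjoint_left.1 hdisj
  have huniv : X₁ ∪ X₂ = Finset.univ := by
    apply Finset.eq_univ_of_forall
    intro v; rcases hcover v with h | h <;> simp [h]
  have hcardn : Fintype.card V = X₁.card + X₂.card := by
    rw [← Finset.card_union_of_disjoint hdisj, huniv, Finset.card_univ]
  -- neighbours of a vertex of X₂ all lie in X₁
  have hndegX1 : ∀ v ∈ X₂, ndeg G v = (X₁.filter (fun u => G.Adj v u)).card := by
    intro v hv
    have hset : {u | G.Adj v u} = ↑(X₁.filter (fun u => G.Adj v u)) := by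
      ext u
      simp only [Set.mem_setOf_eq, Finset.coe_filter, Finset.mem_filter, Set.mem_setOf_eq]
      constructor
      · intro h
        rcases hbip v u h with h1 | h2
        · exact absurd h1.1 (fun hh => hdl hh hv)
        · exact ⟨h2.2, h⟩
      · exact fun h => h.2
    rw [ndeg, hset, Set.ncard_coe_finset]
  have hdeg2 : ∀ v ∈ X₂, Fintype.card V + 2 ≤ 2 * (X₁.filter (fun u => G.Adj v u)).card := by
    intro v hv
    have h := hdeg v hv
    rw [hndegX1 v hv] at h
    have : (Fintype.card V : ℝ) + 2 ≤ 2 * ((X₁.filter (fun u => G.Adj v u)).card : ℝ) := by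
      linarith
    exact_mod_cast this
  -- selection hypothesis for aux_path
  have hsel : ∀ v ∈ X₂, ∀ w ∈ X₂, v ≠ w → ∀ F : Finset V, F.card ≤ s →
      ∃ u, u ∈ X₁ ∧ G.Adj v u ∧ G.Adj w u ∧ u ∉ F := by
    intro v hv w hw hvw F hF
    set A := X₁.filter (fun u => G.Adj v u) with hA
    set B := X₁.filter (fun u => G.Adj w u) with hB
    have hAB : (A ∩ B).card + (A ∪ B).card = A.card + B.card :=
      Finset.card_inter_add_card_union A B
    have hU : (A ∪ B).card ≤ X₁.card :=
      Finset.card_le_card (Finset.union_subset (Finset.filter_subset _ _)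
        (Finset.filter_subset _ _))
    have hAc : Fintype.card V + 2 ≤ 2 * A.card := hdeg2 v hv
    have hBc : Fintype.card V + 2 ≤ 2 * B.card := hdeg2 w hw
    have hint : s + 2 ≤ (A ∩ B).card := by omega
    by_contra hcon
    push_neg at hcon
    have hsub : A ∩ B ⊆ F := by
      intro u hu
      rw [Finset.mem_inter, hA, hB, Finset.mem_filter, Finset.mem_filter] at hu
      by_contra huF
      exact huF (hcon u hu.1.1 hu.1.2 hu.2.2)
    have := Finset.card_le_card hsub
    omega
  -- first neighbour of x₁
  have hne1 : {u | G.Adj x₁ u}.Nonempty := by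
    apply Set.nonempty_of_ncard_ne_zero
    rw [← ndeg]; omega
  obtain ⟨v₁, hadj1⟩ := hne1
  have hv₁ : v₁ ∈ X₂ := by
    rcases hbip x₁ v₁ hadj1 with h1 | h2
    · exact h1.2
    · exact absurd h2.1 (fun hh => hdl hx₁ hh)
  -- a neighbour of x₂ distinct from v₁
  have h2lt : 1 < {u | G.Adj x₂ u}.ncard := by rw [← ndeg]; omega
  obtain ⟨vs, hvsmem, hvsne⟩ := Set.exists_ne_of_one_lt_ncard h2lt v₁
  have hadj2 : G.Adj x₂ vs := hvsmem
  have hvs : vs ∈ X₂ := by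
    rcases hbip x₂ vs hadj2 with h1 | h2
    · exact h1.2
    · exact absurd h2.1 (fun hh => hdl hx₂ hh)
  have hs2 : 2 ≤ s := by
    have : 1 < X₂.card := Finset.one_lt_card.2 ⟨v₁, hv₁, vs, hvs, hvsne.symm⟩
    omega
  -- the list of X₂ vertices
  set mid := ((X₂.erase v₁).erase vs).toList with hmid
  have hmidmem : ∀ x, x ∈ mid ↔ x ∈ (X₂.erase v₁).erase vs := by
    intro x; rw [hmid, Finset.mem_toList]
  have hmidlen : mid.length = s - 2 := by
    rw [hmid, Finset.length_toList, Finset.card_erase_of_mem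
      (Finset.mem_erase.2 ⟨hvsne, hvs⟩), Finset.card_erase_of_mem hv₁]
    omega
  have hLnd : (v₁ :: mid ++ [vs]).Nodup := by
    simp only [List.cons_append, List.nodup_cons, List.nodup_append, List.nodup_cons,
      List.nodup_nil, List.mem_append, List.mem_singleton, List.not_mem_nil, not_false_iff,
      and_true, true_and]
    refine ⟨?_, hmid ▸ Finset.nodup_toList _, ?_⟩
    · push_neg
      constructor
      · intro h
        have := (hmidmem v₁).1 h
        exact (Finset.mem_erase.1 (Finset.mem_of_mem_erase this)).1 rfl
      · exact hvsne.symm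
    · intro a ha ha' hb hab
      exact (Finset.mem_erase.1 ((hmidmem a).1 ha)).1 (hab.trans hb)
  have hLmem : ∀ x ∈ v₁ :: mid ++ [vs], x ∈ X₂ := by
    intro x hx
    simp only [List.cons_append, List.mem_cons, List.mem_append, List.not_mem_nil,
      or_false] at hx
    rcases hx with rfl | hx | rfl
    · exact hv₁
    · exact Finset.mem_of_mem_erase (Finset.mem_of_mem_erase ((hmidmem x).1 hx))
    · exact hvs
  have hFcard : ({x₁, x₂} : Finset V).card = 2 := Finset.card_pair hne
  obtain ⟨p, hp, hsup, hcov⟩ := aux_path G X₁ X₂ hdisj s hsel mid v₁ vs {x₁, x₂}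
    hLnd hLmem (by omega)
  have hx1X2 : x₁ ∉ X₂ := fun h => hdl hx₁ h
  have hx2X2 : x₂ ∉ X₂ := fun h => hdl hx₂ h
  have hx1p : x₁ ∉ p.support := by
    intro h
    rcases hsup x₁ h with h1 | h2
    · exact hx1X2 (hLmem x₁ h1)
    · exact h2.2 (Finset.mem_insert_self x₁ {x₂})
  have hx2p : x₂ ∉ p.support := by
    intro h
    rcases hsup x₂ h with h1 | h2
    · exact hx2X2 (hLmem x₂ h1)
    · exact h2.2 (by simp)
  refine ⟨Walk.cons hadj1 (p.concat hadj2.symm), ?_, ?_⟩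
  · refine Walk.IsPath.cons ?_ ?_
    · rw [Walk.isPath_def, Walk.support_concat, List.nodup_append]
      refine ⟨hp.support_nodup, List.nodup_singleton _, ?_⟩
      intro a ha ha' hb hab
      rw [List.mem_singleton] at hb
      rw [hab, hb] at ha
      exact hx2p ha
    · rw [Walk.support_concat, List.mem_append, List.mem_singleton]
      push_neg
      exact ⟨hx1p, hne⟩
  · intro v hv
    have hvL : v ∈ v₁ :: mid ++ [vs] := by
      by_cases h1 : v = v₁
      · simp [h1]
      · by_cases h2 : v = vs
        · simp [h2]
        · have : v ∈ (X₂.erase v₁).erase vs :=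
            Finset.mem_erase.2 ⟨h2, Finset.mem_erase.2 ⟨h1, hv⟩⟩
          simp only [List.cons_append, List.mem_cons, List.mem_append]
          exact Or.inr (Or.inl ((hmidmem v).2 this))
    have : v ∈ p.support := hcov v hvL
    rw [Walk.support_cons, Walk.support_concat]
    simp only [List.mem_cons, List.mem_append]
    tauto
end

section
/- For every η with 0 < η < 1/3 and every K ≥ 1/η, the following holds: if G is a (1 − η)-complete graph on K vertices whose edges are each coloured red or blue, then some monochromatic component of G has at least (1 − 3η)K vertices; that is, there is a colour such that some connected component of the spanning subgraph of edges of that colour contains at least (1 − 3η)K vertices. -/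
open SimpleGraph

/-- Any red/blue colouring of a `(1-η)`-complete graph on `K ≥ 1/η` vertices has a
monochromatic component on at least `(1-3η)K` vertices. -/
theorem large_monochromatic_component (η : ℝ) (hη0 : 0 < η) (hη : η < 1 / 3) :
    ∀ (V : Type) [Fintype V], ∀ G G₁ G₂ : SimpleGraph V,
      1 / η ≤ (Fintype.card V : ℝ) →
      G₁ ⊔ G₂ = G →
      (∀ v : V, (1 - η) * ((Fintype.card V : ℝ) - 1) ≤ (ndeg G v : ℝ)) →
      (∃ v : V, (1 - 3 * η) * (Fintype.card V : ℝ) ≤ ({u : V | G₁.Reachable v u}.ncard : ℝ)) ∨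
      (∃ v : V, (1 - 3 * η) * (Fintype.card V : ℝ) ≤ ({u : V | G₂.Reachable v u}.ncard : ℝ)) := by
  intro V _ G G₁ G₂ hN hG hdeg
  classical
  set N := Fintype.card V with hNdef
  have hN0 : (0:ℝ) < N := lt_of_lt_of_le (by positivity) hN
  have hNnat : 0 < N := by exact_mod_cast hN0
  have hNe : Nonempty V := Fintype.card_pos_iff.mp hNnat
  obtain ⟨v⟩ := hNe
  set C₁ : Set V := {u | G₁.Reachable v u} with hC1
  set C₂ : Set V := {u | G₂.Reachable v u} with hC2
  have hadj : ∀ u w, G.Adj u w ↔ G₁.Adj u w ∨ G₂.Adj u w := by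
    intro u w; rw [← hG]; exact Iff.rfl
  have key : ∀ (w : V) (S : Set V), w ∉ S → (∀ u ∈ S, ¬ G.Adj w u) →
      ndeg G w + S.ncard + 1 ≤ N := by
    intro w S hw hS
    have hd1 : Disjoint S ({w} : Set V) := Set.disjoint_singleton_right.mpr hw
    have hd2 : Disjoint {u | G.Adj w u} (S ∪ {w}) := by
      rw [Set.disjoint_union_right]
      constructor
      · rw [Set.disjoint_left]; intro u hu hu'; exact hS u hu' hu
      · rw [Set.disjoint_singleton_right]
        simp only [Set.mem_setOf_eq]
        exact G.loopless.irrefl w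
    have e1 : (S ∪ {w}).ncard = S.ncard + 1 := by
      rw [Set.ncard_union_eq hd1 (Set.toFinite _) (Set.toFinite _), Set.ncard_singleton]
    have e2 : ({u | G.Adj w u} ∪ (S ∪ {w})).ncard = ndeg G w + S.ncard + 1 := by
      rw [Set.ncard_union_eq hd2 (Set.toFinite _) (Set.toFinite _), e1, ndeg]
      ring
    calc ndeg G w + S.ncard + 1 = ({u | G.Adj w u} ∪ (S ∪ {w})).ncard := e2.symm
      _ ≤ (Set.univ : Set V).ncard := Set.ncard_le_ncard (Set.subset_univ _) (Set.toFinite _)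
      _ = N := by rw [Set.ncard_univ, Nat.card_eq_fintype_card]
  have hsub : {u | G.Adj v u} ∪ {v} ⊆ C₁ ∪ C₂ := by
    intro u hu
    rcases hu with hu | hu
    · rcases (hadj v u).mp hu with h | h
      · exact Or.inl h.reachable
      · exact Or.inr h.reachable
    · rw [Set.mem_singleton_iff] at hu
      subst hu
      exact Or.inl (SimpleGraph.Reachable.refl _)
  have hlow : ndeg G v + 1 ≤ (C₁ ∪ C₂).ncard := by
    have hd : Disjoint {u | G.Adj v u} ({v} : Set V) := by
      rw [Set.disjoint_singleton_right]
      simp only [Set.mem_setOf_eq]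
      exact G.loopless.irrefl v
    calc ndeg G v + 1 = ({u | G.Adj v u} ∪ {v}).ncard := by
          rw [Set.ncard_union_eq hd (Set.toFinite _) (Set.toFinite _), Set.ncard_singleton, ndeg]
      _ ≤ (C₁ ∪ C₂).ncard := Set.ncard_le_ncard hsub (Set.toFinite _)
  set A : Set V := C₁ \ C₂ with hA
  set B : Set V := C₂ \ C₁ with hB
  have hnoedge : ∀ a ∈ A, ∀ b ∈ B, ¬ G.Adj a b := by
    intro a ha b hb h
    rcases (hadj a b).mp h with h1 | h2
    · exact hb.2 (ha.1.trans h1.reachable)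
    · exact ha.2 (hb.1.trans h2.symm.reachable)
  by_cases hBe : B = ∅
  · left
    refine ⟨v, ?_⟩
    have hsub2 : C₁ ∪ C₂ ⊆ C₁ := by
      intro u hu
      rcases hu with hu | hu
      · exact hu
      · by_contra hu1
        have : u ∈ B := ⟨hu, hu1⟩
        rw [hBe] at this
        exact this
    have h2 : ndeg G v + 1 ≤ C₁.ncard :=
      le_trans hlow (Set.ncard_le_ncard hsub2 (Set.toFinite _))
    have h2' : (ndeg G v : ℝ) + 1 ≤ (C₁.ncard : ℝ) := by exact_mod_cast h2
    have hdv := hdeg v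
    nlinarith [mul_pos hη0 hN0]
  · right
    refine ⟨v, ?_⟩
    obtain ⟨b, hb⟩ := Set.nonempty_iff_ne_empty.mpr hBe
    have hbA : b ∉ A := fun h => hb.2 h.1
    have hkey := key b A hbA (fun a ha h => hnoedge a ha b hb h.symm)
    have hkey' : (ndeg G b : ℝ) + (A.ncard : ℝ) + 1 ≤ (N : ℝ) := by exact_mod_cast hkey
    have hunion : (C₁ ∪ C₂).ncard ≤ C₂.ncard + A.ncard := by
      refine le_trans (Set.ncard_le_ncard ?_ (Set.toFinite _)) (Set.ncard_union_le _ _)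
      intro u hu
      rcases hu with hu | hu
      · by_cases hu2 : u ∈ C₂
        · exact Or.inl hu2
        · exact Or.inr ⟨hu, hu2⟩
      · exact Or.inl hu
    have hunion' : ((C₁ ∪ C₂).ncard : ℝ) ≤ (C₂.ncard : ℝ) + (A.ncard : ℝ) := by
      exact_mod_cast hunion
    have hlow' : (ndeg G v : ℝ) + 1 ≤ ((C₁ ∪ C₂).ncard : ℝ) := by exact_mod_cast hlow
    have hdv := hdeg v
    have hdb := hdeg b
    nlinarith [mul_pos hη0 hN0]
end

section
/- For every η with 0 < η < 1/20 and every K ≥ 1/η, the following holds. Let G be a (1 − η)-complete graph on K vertices with vertex set V, let W ⊆ V satisfy |W| ≥ 4η^{1/2}K and |V \ W| ≥ 4η^{1/2}K, and let G_W be the graph obtained from G by removing all edges contained entirely within W. Suppose every edge of G_W is coloured red or blue, and define W_r to be the set of w ∈ W having red edges to all but at most 3η^{1/2}K vertices of V \ W, and W_b to be the set of w ∈ W having blue edges to all but at most 3η^{1/2}K vertices of V \ W. Then at least one of the following holds: (i) some monochromatic component of G_W has at least (1 − 2η^{1/2})K vertices; (ii) both W_r and W_b are nonempty. -/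
open SimpleGraph

lemma ncard_diff_ge' {V : Type*} [Fintype V] (S T : Set V) :
    (S.ncard : ℝ) - (T.ncard : ℝ) ≤ ((S \ T).ncard : ℝ) := by
  have h1 : S.ncard ≤ (S \ T).ncard + T.ncard := by
    calc S.ncard ≤ ((S \ T) ∪ T).ncard :=
          Set.ncard_le_ncard (Set.subset_diff_union S T) (Set.toFinite _)
      _ ≤ _ := Set.ncard_union_le _ _
  have := (Nat.cast_le (α := ℝ)).mpr h1
  push_cast at this
  linarith

lemma exists_mem_inter' {V : Type*} [Fintype V] {X Y Z : Set V} (hX : X ⊆ Z) (hY : Y ⊆ Z)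
    (h : (Z.ncard : ℝ) < (X.ncard : ℝ) + (Y.ncard : ℝ)) : (X ∩ Y).Nonempty := by
  rw [Set.nonempty_iff_ne_empty]
  intro he
  have h2 := Set.ncard_inter_add_ncard_union X Y (Set.toFinite _) (Set.toFinite _)
  rw [he, Set.ncard_empty] at h2
  have hu : (X ∪ Y).ncard ≤ Z.ncard :=
    Set.ncard_le_ncard (Set.union_subset hX hY) (Set.toFinite _)
  have := (Nat.cast_le (α := ℝ)).mpr hu
  have h2' : ((X ∪ Y).ncard : ℝ) = X.ncard + Y.ncard := by
    have := congrArg (Nat.cast (R := ℝ)) h2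
    push_cast at this
    linarith
  linarith

lemma nbr_count {V : Type} [Fintype V] (G : SimpleGraph V) (η : ℝ) (hη0 : 0 ≤ η)
    (hdeg : ∀ v : V, (1 - η) * ((Fintype.card V : ℝ) - 1) ≤ (ndeg G v : ℝ))
    (v : V) (S : Set V) (hv : v ∉ S) :
    (S.ncard : ℝ) - η * (Fintype.card V : ℝ) ≤ ({u | u ∈ S ∧ G.Adj v u}.ncard : ℝ) := by
  set bad : Set V := {u | u ≠ v ∧ ¬ G.Adj v u} with hbaddef
  have hn1 : (1 : ℕ) ≤ Fintype.card V := Fintype.card_pos_iff.mpr ⟨v⟩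
  -- bad card bound
  have hbadeq : bad = ({v}ᶜ : Set V) \ {u | G.Adj v u} := by
    ext u
    simp only [hbaddef, Set.mem_setOf_eq, Set.mem_diff, Set.mem_compl_iff, Set.mem_singleton_iff]
  have hadjsub : {u | G.Adj v u} ⊆ ({v}ᶜ : Set V) := by
    intro u hu
    simp only [Set.mem_compl_iff, Set.mem_singleton_iff]
    exact fun h => G.irrefl (h ▸ hu)
  have hcompl1 : ({v}ᶜ : Set V).ncard = Fintype.card V - 1 := by
    have := Set.ncard_add_ncard_compl ({v} : Set V)
    rw [Set.ncard_singleton, Nat.card_eq_fintype_card] at this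
    omega
  have hbadcard : (bad.ncard : ℝ) ≤ η * (Fintype.card V : ℝ) := by
    have hd := Set.ncard_diff hadjsub (Set.toFinite _)
    rw [← hbadeq, hcompl1] at hd
    have hle : {u | G.Adj v u}.ncard ≤ Fintype.card V - 1 := hcompl1 ▸ Set.ncard_le_ncard hadjsub (Set.toFinite _)
    have hdR : (bad.ncard : ℝ) = ((Fintype.card V : ℝ) - 1) - (ndeg G v : ℝ) := by
      have : bad.ncard + {u | G.Adj v u}.ncard = Fintype.card V - 1 := by omega
      have := congrArg (Nat.cast (R := ℝ)) this
      push_cast [ndeg, Nat.cast_sub hn1] at this ⊢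
      linarith
    have := hdeg v
    have hn1R : (1 : ℝ) ≤ (Fintype.card V : ℝ) := by exact_mod_cast hn1
    nlinarith
  have hsub : S \ bad ⊆ {u | u ∈ S ∧ G.Adj v u} := by
    intro u hu
    obtain ⟨huS, hub⟩ := hu
    refine ⟨huS, ?_⟩
    by_contra h
    exact hub ⟨fun he => hv (he ▸ huS), h⟩
  have h1 := ncard_diff_ge' S bad
  have h2 : ((S \ bad).ncard : ℝ) ≤ ({u | u ∈ S ∧ G.Adj v u}.ncard : ℝ) := by
    exact_mod_cast Set.ncard_le_ncard hsub (Set.toFinite _)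
  linarith

set_option maxHeartbeats 1000000 in
lemma one_hole_aux (η : ℝ) (hη0 : 0 < η) (hη : η < 1 / 20)
    (V : Type) [Fintype V] [DecidableEq V] (G : SimpleGraph V) (W : Finset V)
    (hK : 1 / η ≤ (Fintype.card V : ℝ))
    (hdeg : ∀ v : V, (1 - η) * ((Fintype.card V : ℝ) - 1) ≤ (ndeg G v : ℝ))
    (hW : 4 * η ^ ((1 : ℝ) / 2) * (Fintype.card V : ℝ) ≤ (W.card : ℝ))
    (GW A B : SimpleGraph V)
    (hGW : ∀ u v : V, GW.Adj u v ↔ G.Adj u v ∧ ¬(u ∈ W ∧ v ∈ W))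
    (hAB : A ⊔ B = GW)
    (hWA : ∀ w ∈ W, 2 * η ^ ((1 : ℝ) / 2) * (Fintype.card V : ℝ) ≤
      ({u : V | u ∉ W ∧ A.Adj w u}.ncard : ℝ)) :
    (∃ v : V, (1 - 2 * η ^ ((1 : ℝ) / 2)) * (Fintype.card V : ℝ) ≤
        ({u : V | A.Reachable v u}.ncard : ℝ)) ∨
    (∃ v : V, (1 - 2 * η ^ ((1 : ℝ) / 2)) * (Fintype.card V : ℝ) ≤
        ({u : V | B.Reachable v u}.ncard : ℝ)) := by
  set n : ℝ := (Fintype.card V : ℝ) with hn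
  set δ : ℝ := η ^ ((1 : ℝ) / 2) with hδ
  have hδ0 : 0 < δ := Real.rpow_pos_of_pos hη0 _
  have hδδ : δ * δ = η := by
    rw [hδ, ← Real.rpow_add hη0]
    norm_num
  have hδ1 : δ < 1 := Real.rpow_lt_one hη0.le (by linarith) (by norm_num)
  have hηδ : η ≤ δ := by nlinarith
  have hn0 : 0 < n := by
    have : (0 : ℝ) < 1 / η := by positivity
    linarith
  have hηn : 1 ≤ η * n := by
    rw [div_le_iff₀ hη0] at hK
    nlinarith
  have hABadj : ∀ u v : V, GW.Adj u v → A.Adj u v ∨ B.Adj u v := by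
    intro u v h
    rw [← hAB] at h
    exact h
  have hcnt := nbr_count G η hη0.le hdeg
  by_cases hconn : ∀ w ∈ W, ∀ w' ∈ W, A.Reachable w w'
  · -- all of W in one A-component
    have hWne : ∃ w, w ∈ W := by
      by_contra h
      push_neg at h
      have : W = ∅ := Finset.eq_empty_iff_forall_notMem.mpr h
      rw [this] at hW
      simp at hW
      nlinarith
    obtain ⟨w₀, hw₀⟩ := hWne
    set C : Set V := {u | A.Reachable w₀ u} with hC
    by_cases hbig : (1 - 2 * δ) * n ≤ (C.ncard : ℝ)
    · exact Or.inl ⟨w₀, hbig⟩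
    push_neg at hbig
    right
    have hWC : (↑W : Set V) ⊆ C := fun w hw => hconn w₀ hw₀ w (Finset.mem_coe.mp hw)
    have hCcard : 4 * δ * n ≤ (C.ncard : ℝ) := by
      refine le_trans hW ?_
      rw [← Set.ncard_coe_finset]
      exact_mod_cast Set.ncard_le_ncard hWC (Set.toFinite _)
    have hCD : (C.ncard : ℝ) + ((Cᶜ).ncard : ℝ) = n := by
      have := Set.ncard_add_ncard_compl C
      rw [Nat.card_eq_fintype_card] at this
      rw [hn]
      exact_mod_cast this
    have hDcard : 2 * δ * n < ((Cᶜ).ncard : ℝ) := by nlinarith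
    have hDW : ∀ d ∈ Cᶜ, d ∉ W := fun d hd hdW => hd (hWC hdW)
    have hCD_B : ∀ c ∈ C, ∀ d ∈ Cᶜ, G.Adj c d → B.Adj c d := by
      intro c hc d hd hadj
      have hgw : GW.Adj c d := (hGW c d).mpr ⟨hadj, fun h => hDW d hd h.2⟩
      rcases hABadj c d hgw with hA' | hB'
      · exact absurd (hc.trans hA'.reachable) hd
      · exact hB'
    have hdC : ∀ d ∈ Cᶜ, (C.ncard : ℝ) - η * n ≤ ({c | c ∈ C ∧ B.Adj d c}.ncard : ℝ) := by
      intro d hd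
      refine le_trans (hcnt d C hd) ?_
      have hsub : {c | c ∈ C ∧ G.Adj d c} ⊆ {c | c ∈ C ∧ B.Adj d c} :=
        fun c hc => ⟨hc.1, (hCD_B c hc.1 d hd hc.2.symm).symm⟩
      exact_mod_cast Set.ncard_le_ncard hsub (Set.toFinite _)
    have hDne : (Cᶜ : Set V).Nonempty := by
      refine Set.nonempty_of_ncard_ne_zero fun h => ?_
      rw [h] at hDcard
      push_cast at hDcard
      nlinarith
    obtain ⟨d₀, hd₀⟩ := hDne
    refine ⟨d₀, ?_⟩
    have hDComp : ∀ d ∈ Cᶜ, B.Reachable d₀ d := by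
      intro d hd
      obtain ⟨c, hc⟩ := exists_mem_inter' (X := {c | c ∈ C ∧ B.Adj d₀ c})
        (Y := {c | c ∈ C ∧ B.Adj d c}) (Z := C) (fun _ h => h.1) (fun _ h => h.1)
        (by have h1 := hdC d₀ hd₀; have h2 := hdC d hd; nlinarith)
      exact hc.1.2.reachable.trans hc.2.2.symm.reachable
    have hall : ∀ u, B.Reachable d₀ u := by
      intro u
      by_cases hu : u ∈ C
      · have h1 := hcnt u Cᶜ (by simpa using hu)
        have h2 : ({x | x ∈ Cᶜ ∧ G.Adj u x}.ncard : ℝ) ≤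
            ({x | x ∈ Cᶜ ∧ B.Adj u x}.ncard : ℝ) := by
          have hsub : {x | x ∈ Cᶜ ∧ G.Adj u x} ⊆ {x | x ∈ Cᶜ ∧ B.Adj u x} :=
            fun x hx => ⟨hx.1, hCD_B u hu x hx.1 hx.2⟩
          exact_mod_cast Set.ncard_le_ncard hsub (Set.toFinite _)
        have hpos : (0 : ℝ) < ({x | x ∈ Cᶜ ∧ B.Adj u x}.ncard : ℝ) := by nlinarith
        obtain ⟨d, hd⟩ := Set.nonempty_of_ncard_ne_zero
          (s := {x | x ∈ Cᶜ ∧ B.Adj u x}) (by exact_mod_cast hpos.ne')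
        exact (hDComp d hd.1).trans hd.2.symm.reachable
      · exact hDComp u hu
    have : {u : V | B.Reachable d₀ u} = Set.univ := Set.eq_univ_of_forall hall
    rw [this, Set.ncard_univ, Nat.card_eq_fintype_card]
    nlinarith
  · -- two vertices of W in different A-components
    push_neg at hconn
    obtain ⟨w₁, hw₁, w₂, hw₂, hsep⟩ := hconn
    right
    set N₁ : Set V := {u | u ∉ W ∧ A.Adj w₁ u} with hN₁def
    set N₂ : Set V := {u | u ∉ W ∧ A.Adj w₂ u} with hN₂def
    have hN₁ : 2 * δ * n ≤ (N₁.ncard : ℝ) := hWA w₁ hw₁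
    have hN₂ : 2 * δ * n ≤ (N₂.ncard : ℝ) := hWA w₂ hw₂
    have hsep' : ∀ x ∈ N₁, ∀ y ∈ N₂, ¬ A.Reachable x y := by
      intro x hx y hy h
      exact hsep (hx.2.reachable.trans (h.trans hy.2.reachable.symm))
    have hx2 : ∀ x ∈ N₁, x ∉ N₂ := fun x hx h => hsep' x hx x h (Reachable.refl x)
    have hy1 : ∀ y ∈ N₂, y ∉ N₁ := fun y hy h => hsep' y h y hy (Reachable.refl y)
    have hBxy : ∀ x ∈ N₁, ∀ y ∈ N₂, G.Adj x y → B.Adj x y := by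
      intro x hx y hy hadj
      have hgw : GW.Adj x y := (hGW x y).mpr ⟨hadj, fun h => hx.1 h.1⟩
      rcases hABadj x y hgw with hA' | hB'
      · exact absurd hA'.reachable (hsep' x hx y hy)
      · exact hB'
    have hxN₂ : ∀ x ∈ N₁, (N₂.ncard : ℝ) - η * n ≤ ({y | y ∈ N₂ ∧ B.Adj x y}.ncard : ℝ) := by
      intro x hx
      refine le_trans (hcnt x N₂ (hx2 x hx)) ?_
      have hsub : {y | y ∈ N₂ ∧ G.Adj x y} ⊆ {y | y ∈ N₂ ∧ B.Adj x y} :=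
        fun y hy => ⟨hy.1, hBxy x hx y hy.1 hy.2⟩
      exact_mod_cast Set.ncard_le_ncard hsub (Set.toFinite _)
    have hyN₁ : ∀ y ∈ N₂, (N₁.ncard : ℝ) - η * n ≤ ({x | x ∈ N₁ ∧ B.Adj y x}.ncard : ℝ) := by
      intro y hy
      refine le_trans (hcnt y N₁ (hy1 y hy)) ?_
      have hsub : {x | x ∈ N₁ ∧ G.Adj y x} ⊆ {x | x ∈ N₁ ∧ B.Adj y x} :=
        fun x hx => ⟨hx.1, (hBxy x hx.1 y hy hx.2.symm).symm⟩
      exact_mod_cast Set.ncard_le_ncard hsub (Set.toFinite _)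
    have hN₁ne : N₁.Nonempty := by
      refine Set.nonempty_of_ncard_ne_zero fun h => ?_
      rw [h] at hN₁
      push_cast at hN₁
      nlinarith
    obtain ⟨x₀, hx₀⟩ := hN₁ne
    refine ⟨x₀, ?_⟩
    have hN1Comp : ∀ x ∈ N₁, B.Reachable x₀ x := by
      intro x hx
      obtain ⟨y, hy⟩ := exists_mem_inter' (X := {y | y ∈ N₂ ∧ B.Adj x₀ y})
        (Y := {y | y ∈ N₂ ∧ B.Adj x y}) (Z := N₂) (fun _ h => h.1) (fun _ h => h.1)
        (by have h1 := hxN₂ x₀ hx₀; have h2 := hxN₂ x hx; nlinarith)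
      exact hy.1.2.reachable.trans hy.2.2.symm.reachable
    have hN2Comp : ∀ y ∈ N₂, B.Reachable x₀ y := by
      intro y hy
      have h1 := hyN₁ y hy
      have hpos : (0 : ℝ) < ({x | x ∈ N₁ ∧ B.Adj y x}.ncard : ℝ) := by nlinarith
      obtain ⟨x, hx⟩ := Set.nonempty_of_ncard_ne_zero
        (s := {x | x ∈ N₁ ∧ B.Adj y x}) (by exact_mod_cast hpos.ne')
      exact (hN1Comp x hx.1).trans hx.2.symm.reachable
    have hall : ∀ v, B.Reachable x₀ v := by
      intro v
      by_cases hv1 : v ∈ N₁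
      · exact hN1Comp v hv1
      by_cases hv2 : v ∈ N₂
      · exact hN2Comp v hv2
      have hS₁ := hcnt v N₁ hv1
      have hS₁pos : (0 : ℝ) < ({x | x ∈ N₁ ∧ G.Adj v x}.ncard : ℝ) := by nlinarith
      obtain ⟨x, hx⟩ := Set.nonempty_of_ncard_ne_zero
        (s := {x | x ∈ N₁ ∧ G.Adj v x}) (by exact_mod_cast hS₁pos.ne')
      have hgwx : GW.Adj v x := (hGW v x).mpr ⟨hx.2, fun h => hx.1.1 h.2⟩
      rcases hABadj v x hgwx with hA1 | hB1
      · have hS₂ := hcnt v N₂ hv2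
        have hS₂pos : (0 : ℝ) < ({y | y ∈ N₂ ∧ G.Adj v y}.ncard : ℝ) := by nlinarith
        obtain ⟨y, hy⟩ := Set.nonempty_of_ncard_ne_zero
          (s := {y | y ∈ N₂ ∧ G.Adj v y}) (by exact_mod_cast hS₂pos.ne')
        have hgwy : GW.Adj v y := (hGW v y).mpr ⟨hy.2, fun h => hy.1.1 h.2⟩
        rcases hABadj v y hgwy with hA2 | hB2
        · exact absurd (hA1.symm.reachable.trans hA2.reachable) (hsep' x hx.1 y hy.1)
        · exact (hN2Comp y hy.1).trans hB2.symm.reachable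
      · exact (hN1Comp x hx.1).trans hB1.symm.reachable
    have : {u : V | B.Reachable x₀ u} = Set.univ := Set.eq_univ_of_forall hall
    rw [this, Set.ncard_univ, Nat.card_eq_fintype_card]
    nlinarith

/-- Structure of two-coloured almost-complete graphs with one hole: either there is a huge
monochromatic component, or `W` contains both a "red-dominant" and a "blue-dominant" vertex. -/
theorem one_hole_structure (η : ℝ) (hη0 : 0 < η) (hη : η < 1 / 20) :
    ∀ (V : Type) [Fintype V] [DecidableEq V], ∀ (G : SimpleGraph V) (W : Finset V),
      1 / η ≤ (Fintype.card V : ℝ) →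
      (∀ v : V, (1 - η) * ((Fintype.card V : ℝ) - 1) ≤ (ndeg G v : ℝ)) →
      4 * η ^ ((1 : ℝ) / 2) * (Fintype.card V : ℝ) ≤ (W.card : ℝ) →
      4 * η ^ ((1 : ℝ) / 2) * (Fintype.card V : ℝ) ≤ ((Wᶜ : Finset V).card : ℝ) →
      ∀ GW R B : SimpleGraph V,
        (∀ u v : V, GW.Adj u v ↔ G.Adj u v ∧ ¬(u ∈ W ∧ v ∈ W)) →
        R ⊔ B = GW →
        ((∃ v : V, (1 - 2 * η ^ ((1 : ℝ) / 2)) * (Fintype.card V : ℝ) ≤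
            ({u : V | R.Reachable v u}.ncard : ℝ)) ∨
         (∃ v : V, (1 - 2 * η ^ ((1 : ℝ) / 2)) * (Fintype.card V : ℝ) ≤
            ({u : V | B.Reachable v u}.ncard : ℝ))) ∨
        ((∃ w ∈ W, ({u : V | u ∉ W ∧ ¬ R.Adj w u}.ncard : ℝ) ≤
            3 * η ^ ((1 : ℝ) / 2) * (Fintype.card V : ℝ)) ∧
         (∃ w ∈ W, ({u : V | u ∉ W ∧ ¬ B.Adj w u}.ncard : ℝ) ≤
            3 * η ^ ((1 : ℝ) / 2) * (Fintype.card V : ℝ))) := by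
  intro V _ _ G W hK hdeg hW hWc GW R B hGW hRB
  set n : ℝ := (Fintype.card V : ℝ) with hn
  set δ : ℝ := η ^ ((1 : ℝ) / 2) with hδ
  have hδ0 : 0 < δ := Real.rpow_pos_of_pos hη0 _
  have hδδ : δ * δ = η := by
    rw [hδ, ← Real.rpow_add hη0]; norm_num
  have hδ1 : δ < 1 := Real.rpow_lt_one hη0.le (by linarith) (by norm_num)
  have hηδ : η ≤ δ := by nlinarith
  have hcnt := nbr_count G η hη0.le hdeg
  -- generic step: few non-`X`-edges to `Wᶜ` forces many `Y`-edges to `Wᶜ`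
  have key : ∀ (X Y : SimpleGraph V), X ⊔ Y = GW →
      ∀ w ∈ W, 3 * δ * n < ({u : V | u ∉ W ∧ ¬ X.Adj w u}.ncard : ℝ) →
      2 * δ * n ≤ ({u : V | u ∉ W ∧ Y.Adj w u}.ncard : ℝ) := by
    intro X Y hXY w hw hbig
    set T : Set V := {u : V | u ∉ W ∧ ¬ X.Adj w u} with hT
    have hwT : w ∉ T := fun h => h.1 hw
    have h1 := hcnt w T hwT
    have hsub : {u | u ∈ T ∧ G.Adj w u} ⊆ {u : V | u ∉ W ∧ Y.Adj w u} := by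
      intro u hu
      refine ⟨hu.1.1, ?_⟩
      have hgw : GW.Adj w u := (hGW w u).mpr ⟨hu.2, fun h => hu.1.1 h.2⟩
      rw [← hXY] at hgw
      rcases hgw with hX' | hY'
      · exact absurd hX' hu.1.2
      · exact hY'
    have h2 : ({u | u ∈ T ∧ G.Adj w u}.ncard : ℝ) ≤
        ({u : V | u ∉ W ∧ Y.Adj w u}.ncard : ℝ) := by
      exact_mod_cast Set.ncard_le_ncard hsub (Set.toFinite _)
    have hn0 : 0 < n := by
      have : (0 : ℝ) < 1 / η := by positivity
      linarith
    nlinarith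
  by_cases hWr : ∃ w ∈ W, ({u : V | u ∉ W ∧ ¬ R.Adj w u}.ncard : ℝ) ≤ 3 * δ * n
  · by_cases hWb : ∃ w ∈ W, ({u : V | u ∉ W ∧ ¬ B.Adj w u}.ncard : ℝ) ≤ 3 * δ * n
    · exact Or.inr ⟨hWr, hWb⟩
    · push_neg at hWb
      left
      exact one_hole_aux η hη0 hη V G W hK hdeg hW GW R B hGW hRB
        (fun w hw => key B R (by rw [sup_comm]; exact hRB) w hw (hWb w hw))
  · push_neg at hWr
    left
    refine Or.symm (one_hole_aux η hη0 hη V G W hK hdeg hW GW B R hGW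
      (by rw [sup_comm]; exact hRB)
      (fun w hw => key R B hRB w hw (hWr w hw)))
end
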